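/- Let f be differentiable on the interior of an interval containing [a,b], a < b. If |f'| is convex on [a,b], then |(1/(b-a)) ∫_a^b f(x) dx − f((a+b)/2)| ≤ (b-a)(|f'(a)| + |f'(b)|)/8. -/

import Mathlib

open MeasureTheory intervalIntegral

theorem hermite_hadamard_convex_abs_deriv
    (I : Set ℝ) (hIopen : IsOpen I) (hIconn : I.OrdConnected)
    (f f' : ℝ → ℝ) (a b : ℝ) (hab : a < b) (hsub : Set.Icc a b ⊆ I)
    (hf : ∀ x ∈ I, HasDerivAt f (f' x) x)
    (hconv : ConvexOn ℝ (Set.Icc a b) (fun x => |f' x|)) :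
    |(1 / (b - a)) * (∫ x in a..b, f x) - f ((a + b) / 2)|
      ≤ (b - a) * (|f' a| + |f' b|) / 8 := by
  set m : ℝ := (a + b) / 2 with hm
  have hba : (0:ℝ) < b - a := by linarith
  have hne : b - a ≠ 0 := ne_of_gt hba
  have ham : a ≤ m := by rw [hm]; linarith
  have hmb : m ≤ b := by rw [hm]; linarith
  set A := |f' a| with hA
  set B := |f' b| with hB
  have hA0 : 0 ≤ A := abs_nonneg _
  have hB0 : 0 ≤ B := abs_nonneg _
  -- convexity bound on |f'|
  have hbound : ∀ x ∈ Set.Icc a b, |f' x| ≤ ((b - x) * A + (x - a) * B) / (b - a) := by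
    intro x hx
    obtain ⟨hx1, hx2⟩ := hx
    have hsum : (b - x) / (b - a) + (x - a) / (b - a) = 1 := by field_simp; ring
    have hcomb : (b - x) / (b - a) * a + (x - a) / (b - a) * b = x := by
      field_simp [hne]
      ring
    have h := hconv.2 (Set.left_mem_Icc.mpr hab.le) (Set.right_mem_Icc.mpr hab.le)
      (div_nonneg (by linarith) hba.le) (div_nonneg (by linarith) hba.le) hsum
    simp only [smul_eq_mul] at h
    rw [hcomb] at h
    have : ((b - x) * A + (x - a) * B) / (b - a)
        = (b - x) / (b - a) * A + (x - a) / (b - a) * B := by ring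
    rw [this]
    exact h
  -- measurability and integrability of f'
  have hmeas : AEStronglyMeasurable f' (volume.restrict (Set.Ioc a b)) := by
    have h1 : ∀ x ∈ Set.Ioc a b, deriv f x = f' x := fun x hx =>
      (hf x (hsub (Set.Ioc_subset_Icc_self hx))).deriv
    exact ((measurable_deriv f).aestronglyMeasurable.restrict).congr
      ((ae_restrict_iff' measurableSet_Ioc).mpr (ae_of_all _ h1))
  have hint_f' : IntervalIntegrable f' volume a b := by
    rw [intervalIntegrable_iff_integrableOn_Ioc_of_le hab.le]
    have hconst : IntegrableOn (fun _ : ℝ => A + B) (Set.Ioc a b) volume :=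
      integrableOn_const measure_Ioc_lt_top.ne
    refine hconst.mono' hmeas ?_
    filter_upwards [ae_restrict_mem measurableSet_Ioc] with x hx
    have h1 := hbound x (Set.Ioc_subset_Icc_self hx)
    have hx1 := hx.1
    have hx2 := hx.2
    have h2 : ((b - x) * A + (x - a) * B) / (b - a) ≤ A + B := by
      rw [div_le_iff₀ hba]
      nlinarith
    simpa [Real.norm_eq_abs] using h1.trans h2
  have hint_f'1 : IntervalIntegrable f' volume a m :=
    hint_f'.mono_set (by rw [Set.uIcc_of_le ham, Set.uIcc_of_le hab.le]
                         exact Set.Icc_subset_Icc le_rfl hmb)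
  have hint_f'2 : IntervalIntegrable f' volume m b :=
    hint_f'.mono_set (by rw [Set.uIcc_of_le hmb, Set.uIcc_of_le hab.le]
                         exact Set.Icc_subset_Icc ham le_rfl)
  -- continuity and integrability of f
  have hcf : ContinuousOn f (Set.Icc a b) := fun x hx =>
    ((hf x (hsub hx)).continuousAt).continuousWithinAt
  have hintf1 : IntervalIntegrable f volume a m :=
    (hcf.mono (by rw [Set.uIcc_of_le ham]; exact Set.Icc_subset_Icc le_rfl hmb)).intervalIntegrable
  have hintf2 : IntervalIntegrable f volume m b :=
    (hcf.mono (by rw [Set.uIcc_of_le hmb]; exact Set.Icc_subset_Icc ham le_rfl)).intervalIntegrable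
  -- integration by parts on [a, m]
  have hparts1 : ∫ x in a..m, (x - a) * f' x
      = (m - a) * f m - (a - a) * f a - ∫ x in a..m, 1 * f x := by
    refine integral_mul_deriv_eq_deriv_mul (fun x _ => (hasDerivAt_id x).sub_const a)
      (fun x hx => hf x (hsub ?_)) intervalIntegrable_const hint_f'1
    rw [Set.uIcc_of_le ham] at hx
    exact ⟨hx.1, hx.2.trans hmb⟩
  have hparts2 : ∫ x in m..b, (x - b) * f' x
      = (b - b) * f b - (m - b) * f m - ∫ x in m..b, 1 * f x := by
    refine integral_mul_deriv_eq_deriv_mul (fun x _ => (hasDerivAt_id x).sub_const b)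
      (fun x hx => hf x (hsub ?_)) intervalIntegrable_const hint_f'2
    rw [Set.uIcc_of_le hmb] at hx
    exact ⟨ham.trans hx.1, hx.2⟩
  simp only [one_mul, sub_self, zero_mul, sub_zero] at hparts1 hparts2
  have hsplit : (∫ x in a..m, f x) + ∫ x in m..b, f x = ∫ x in a..b, f x :=
    integral_add_adjacent_intervals hintf1 hintf2
  set I₁ : ℝ := ∫ x in a..m, (x - a) * f' x with hI₁
  set I₂ : ℝ := ∫ x in m..b, (x - b) * f' x with hI₂
  have hkey : (∫ x in a..b, f x) - (b - a) * f m = -(I₁ + I₂) := by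
    have hfm : (m - a) * f m + (- (m - b)) * f m = (b - a) * f m := by
      rw [hm]; ring
    linarith [hparts1, hparts2, hsplit, hfm]
  -- bound I₁
  have hb1 : |I₁| ≤ (b - a) ^ 2 * (2 * A + B) / 24 := by
    have hInt1 : IntervalIntegrable (fun x => (x - a) * f' x) volume a m :=
      hint_f'1.continuousOn_mul (by fun_prop)
    have hg1cont : Continuous (fun x : ℝ => (x - a) * (((b - x) * A + (x - a) * B) / (b - a))) := by
      fun_prop
    have hmono : (∫ x in a..m, |(x - a) * f' x|)
        ≤ ∫ x in a..m, (x - a) * (((b - x) * A + (x - a) * B) / (b - a)) := by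
      refine integral_mono_on ham hInt1.abs (hg1cont.intervalIntegrable _ _) ?_
      intro x hx
      have hxa : 0 ≤ x - a := by linarith [hx.1]
      rw [abs_mul, abs_of_nonneg hxa]
      exact mul_le_mul_of_nonneg_left (hbound x ⟨hx.1, hx.2.trans hmb⟩) hxa
    have hval : (∫ x in a..m, (x - a) * (((b - x) * A + (x - a) * B) / (b - a)))
        = (b - a) ^ 2 * (2 * A + B) / 24 := by
      have hFT : (∫ x in a..m, (x - a) * (((b - x) * A + (x - a) * B) / (b - a)))
          = (A / 2 * (m - a) ^ 2 + (B - A) / (b - a) / 3 * (m - a) ^ 3)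
            - (A / 2 * (a - a) ^ 2 + (B - A) / (b - a) / 3 * (a - a) ^ 3) := by
        refine integral_eq_sub_of_hasDerivAt
          (f := fun y => A / 2 * (y - a) ^ 2 + (B - A) / (b - a) / 3 * (y - a) ^ 3)
          (fun x _ => ?_) (hg1cont.intervalIntegrable _ _)
        have hid : HasDerivAt (fun y : ℝ => y - a) 1 x := (hasDerivAt_id x).sub_const a
        have h2 : HasDerivAt (fun y : ℝ => A / 2 * (y - a) ^ 2)
            (A / 2 * (2 * (x - a) ^ 1 * 1)) x := (hid.pow 2).const_mul _
        have h3 : HasDerivAt (fun y : ℝ => (B - A) / (b - a) / 3 * (y - a) ^ 3)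
            ((B - A) / (b - a) / 3 * (3 * (x - a) ^ 2 * 1)) x := (hid.pow 3).const_mul _
        have := h2.add h3
        refine this.congr_deriv ?_
        field_simp
        ring
      rw [hFT, hm]
      field_simp
      ring
    calc |I₁| ≤ ∫ x in a..m, |(x - a) * f' x| := abs_integral_le_integral_abs ham
      _ ≤ _ := hmono.trans_eq hval
  -- bound I₂
  have hb2 : |I₂| ≤ (b - a) ^ 2 * (A + 2 * B) / 24 := by
    have hInt2 : IntervalIntegrable (fun x => (x - b) * f' x) volume m b :=
      hint_f'2.continuousOn_mul (by fun_prop)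
    have hg2cont : Continuous (fun x : ℝ => (b - x) * (((b - x) * A + (x - a) * B) / (b - a))) := by
      fun_prop
    have hmono : (∫ x in m..b, |(x - b) * f' x|)
        ≤ ∫ x in m..b, (b - x) * (((b - x) * A + (x - a) * B) / (b - a)) := by
      refine integral_mono_on hmb hInt2.abs (hg2cont.intervalIntegrable _ _) ?_
      intro x hx
      have hxb : 0 ≤ b - x := by linarith [hx.2]
      have : |(x - b) * f' x| = (b - x) * |f' x| := by
        rw [abs_mul, abs_sub_comm, abs_of_nonneg hxb]
      rw [this]
      exact mul_le_mul_of_nonneg_left (hbound x ⟨ham.trans hx.1, hx.2⟩) hxb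
    have hval : (∫ x in m..b, (b - x) * (((b - x) * A + (x - a) * B) / (b - a)))
        = (b - a) ^ 2 * (A + 2 * B) / 24 := by
      have hFT : (∫ x in m..b, (b - x) * (((b - x) * A + (x - a) * B) / (b - a)))
          = ((B - A) / (b - a) / 3 * (b - b) ^ 3 - B / 2 * (b - b) ^ 2)
            - ((B - A) / (b - a) / 3 * (b - m) ^ 3 - B / 2 * (b - m) ^ 2) := by
        refine integral_eq_sub_of_hasDerivAt
          (f := fun y => (B - A) / (b - a) / 3 * (b - y) ^ 3 - B / 2 * (b - y) ^ 2)
          (fun x _ => ?_) (hg2cont.intervalIntegrable _ _)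
        have hid : HasDerivAt (fun y : ℝ => b - y) (-1) x := by
          simpa using (hasDerivAt_id x).const_sub b
        have h3 : HasDerivAt (fun y : ℝ => (B - A) / (b - a) / 3 * (b - y) ^ 3)
            ((B - A) / (b - a) / 3 * (3 * (b - x) ^ 2 * (-1))) x := (hid.pow 3).const_mul _
        have h2 : HasDerivAt (fun y : ℝ => B / 2 * (b - y) ^ 2)
            (B / 2 * (2 * (b - x) ^ 1 * (-1))) x := (hid.pow 2).const_mul _
        have := h3.sub h2
        refine this.congr_deriv ?_
        field_simp
        ring
      rw [hFT, hm]
      field_simp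
      ring
    calc |I₂| ≤ ∫ x in m..b, |(x - b) * f' x| := abs_integral_le_integral_abs hmb
      _ ≤ _ := hmono.trans_eq hval
  -- combine
  have hgoal : (1 / (b - a)) * (∫ x in a..b, f x) - f m
      = ((∫ x in a..b, f x) - (b - a) * f m) / (b - a) := by
    field_simp
  rw [hgoal, abs_div, abs_of_pos hba, div_le_iff₀ hba, hkey, abs_neg]
  have habs := abs_add_le I₁ I₂
  have hsum : (b - a) ^ 2 * (2 * A + B) / 24 + (b - a) ^ 2 * (A + 2 * B) / 24
      = (b - a) * (A + B) / 8 * (b - a) := by ring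
  linarith
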